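/- Let X be a fixed finite set and let P_N and Q_N, N >= 1, be two FOES model sequences on X^N satisfying condition PSR, with P_N S-unstable. Then for every epsilon with 0 < epsilon < 1, the Q_N-probability of the complement X^N \ M_{epsilon,N} of the epsilon-modal set of P_N converges to 1 as N tends to infinity. (Corollary 1(ii)) -/

import Mathlib

/-- The log-ratio of extremal probabilities of a positive function on a finite nonempty type. -/
noncomputable def LREP {S : Type*} [Fintype S] [Nonempty S] (P : S → ℝ) : ℝ :=
  Real.log (Finset.univ.sup' Finset.univ_nonempty P / Finset.univ.inf' Finset.univ_nonempty P)

open scoped Classical in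
/-- The ε-modal set of a model `P` on `Fin N → X`. -/
noncomputable def modalSet {X : Type*} [Fintype X] [Nonempty X] {N : ℕ}
    (P : (Fin N → X) → ℝ) (ε : ℝ) : Finset (Fin N → X) :=
  Finset.univ.filter fun x =>
    Real.log (P x) >
      (1 - ε) * Finset.univ.sup' Finset.univ_nonempty (fun y => Real.log (P y)) +
        ε * Finset.univ.inf' Finset.univ_nonempty (fun y => Real.log (P y))

set_option maxHeartbeats 1000000 in
open scoped Classical in
/-- Corollary 1(ii): under condition PSR with `P` S-unstable, `Q` puts asymptotically all mass
on the complement of any ε-modal set of `P`. -/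
theorem corollary1_ii {X : Type*} [Fintype X] [Nonempty X]
    (P Q : ∀ N : ℕ, (Fin N → X) → ℝ)
    (hPpos : ∀ N : ℕ, 1 ≤ N → ∀ x, 0 < P N x)
    (hPsum : ∀ N : ℕ, 1 ≤ N → ∑ x, P N x = 1)
    (hQpos : ∀ N : ℕ, 1 ≤ N → ∀ x, 0 < Q N x)
    (hQsum : ∀ N : ℕ, 1 ≤ N → ∑ x, Q N x = 1)
    (hPSR : ∀ N : ℕ, 1 ≤ N → ∀ x : Fin N → X,
      P N x * Q N x =
        Finset.univ.sup' Finset.univ_nonempty (P N) *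
          Finset.univ.inf' Finset.univ_nonempty (Q N))
    (hunstable : Filter.Tendsto (fun N : ℕ => LREP (P N) / (N : ℝ))
      Filter.atTop Filter.atTop)
    {ε : ℝ} (hε0 : 0 < ε) (hε1 : ε < 1) :
    Filter.Tendsto (fun N : ℕ => ∑ x ∈ (modalSet (P N) ε)ᶜ, Q N x)
      Filter.atTop (nhds 1) := by
  classical
  set f : ℕ → ℝ := fun N => ∑ x ∈ modalSet (P N) ε, Q N x with hf
  set c : ℝ := (Fintype.card X : ℝ) with hc
  have hc1 : (1 : ℝ) ≤ c := by
    have : 0 < Fintype.card X := Fintype.card_pos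
    rw [hc]; exact_mod_cast this
  -- key pointwise/sum bound
  have key : ∀ N : ℕ, 1 ≤ N → f N ≤ c ^ N * Real.exp (-(1 - ε) * LREP (P N)) := by
    intro N hN
    set s := Finset.univ.sup' Finset.univ_nonempty (P N) with hs
    set i := Finset.univ.inf' Finset.univ_nonempty (P N) with hi
    set I := Finset.univ.inf' Finset.univ_nonempty (Q N) with hI
    obtain ⟨b, -, hb⟩ := Finset.exists_mem_eq_inf' (Finset.univ_nonempty) (P N)
    rw [← hi] at hb
    have hipos : 0 < i := by rw [hb]; exact hPpos N hN b
    have his : i ≤ s := by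
      rw [hb, hs]; exact Finset.le_sup' _ (Finset.mem_univ b)
    have hspos : 0 < s := lt_of_lt_of_le hipos his
    have hIpos : 0 < I := by
      obtain ⟨b', -, hb'⟩ := Finset.exists_mem_eq_inf' (Finset.univ_nonempty) (Q N)
      rw [← hI] at hb'
      rw [hb']; exact hQpos N hN b'
    -- I ≤ i / s , in log form: log s + log I ≤ log i
    have hlogI : Real.log s + Real.log I ≤ Real.log i := by
      have h1 : Q N b ≤ 1 := by
        rw [← hQsum N hN]
        exact Finset.single_le_sum (fun x _ => (hQpos N hN x).le) (Finset.mem_univ b)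
      have h2 : s * I ≤ i := by
        have hps := hPSR N hN b
        rw [← hs, ← hI, ← hb] at hps
        calc s * I = i * Q N b := hps.symm
          _ ≤ i * 1 := by nlinarith [hQpos N hN b]
          _ = i := mul_one i
      calc Real.log s + Real.log I = Real.log (s * I) :=
            (Real.log_mul (ne_of_gt hspos) (ne_of_gt hIpos)).symm
        _ ≤ Real.log i := Real.log_le_log (by positivity) h2
    -- sup'/inf' of log P
    have hsupLog : Finset.univ.sup' Finset.univ_nonempty (fun y => Real.log (P N y))
        = Real.log s := by
      apply le_antisymm
      · exact Finset.sup'_le _ _ fun y _ =>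
          Real.log_le_log (hPpos N hN y) (Finset.le_sup' _ (Finset.mem_univ y))
      · obtain ⟨a, -, ha⟩ := Finset.exists_mem_eq_sup' (Finset.univ_nonempty) (P N)
        rw [← hs] at ha
        rw [ha]
        exact Finset.le_sup' (fun y => Real.log (P N y)) (Finset.mem_univ a)
    have hinfLog : Finset.univ.inf' Finset.univ_nonempty (fun y => Real.log (P N y))
        = Real.log i := by
      apply le_antisymm
      · rw [hb]
        exact Finset.inf'_le (fun y => Real.log (P N y)) (Finset.mem_univ b)
      · exact Finset.le_inf' _ _ fun y _ =>
          Real.log_le_log hipos (Finset.inf'_le _ (Finset.mem_univ y))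
    have hLREP : LREP (P N) = Real.log s - Real.log i := by
      rw [LREP, ← hs, ← hi, Real.log_div (ne_of_gt hspos) (ne_of_gt hipos)]
    -- pointwise bound on the modal set
    have hpt : ∀ x ∈ modalSet (P N) ε, Q N x ≤ Real.exp (-(1 - ε) * LREP (P N)) := by
      intro x hx
      rw [modalSet, Finset.mem_filter] at hx
      have hlogPx : Real.log (P N x) > (1 - ε) * Real.log s + ε * Real.log i := by
        rw [← hsupLog, ← hinfLog]; exact hx.2
      have hQx : Real.log (Q N x) = Real.log s + Real.log I - Real.log (P N x) := by
        have hps := hPSR N hN x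
        rw [← hs, ← hI] at hps
        have h' : Real.log (P N x) + Real.log (Q N x) = Real.log s + Real.log I := by
          rw [← Real.log_mul (ne_of_gt (hPpos N hN x)) (ne_of_gt (hQpos N hN x)),
            ← Real.log_mul (ne_of_gt hspos) (ne_of_gt hIpos), hps]
        linarith
      have hlog : Real.log (Q N x) ≤ -(1 - ε) * LREP (P N) := by
        rw [hLREP]; nlinarith
      calc Q N x = Real.exp (Real.log (Q N x)) := (Real.exp_log (hQpos N hN x)).symm
        _ ≤ Real.exp (-(1 - ε) * LREP (P N)) := Real.exp_le_exp.mpr hlog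
    -- sum bound
    calc f N ≤ (modalSet (P N) ε).card • Real.exp (-(1 - ε) * LREP (P N)) :=
          Finset.sum_le_card_nsmul _ _ _ hpt
      _ = ((modalSet (P N) ε).card : ℝ) * Real.exp (-(1 - ε) * LREP (P N)) := by
          rw [nsmul_eq_mul]
      _ ≤ c ^ N * Real.exp (-(1 - ε) * LREP (P N)) := by
          apply mul_le_mul_of_nonneg_right _ (Real.exp_pos _).le
          have : (modalSet (P N) ε).card ≤ Fintype.card (Fin N → X) :=
            Finset.card_le_card (Finset.subset_univ _) |>.trans_eq Finset.card_univ
          calc ((modalSet (P N) ε).card : ℝ) ≤ (Fintype.card (Fin N → X) : ℝ) := by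
                exact_mod_cast this
            _ = c ^ N := by
                rw [hc]
                norm_cast
                simp [Fintype.card_fun]
  -- the bound tends to 0
  have hbound : Filter.Tendsto (fun N : ℕ => c ^ N * Real.exp (-(1 - ε) * LREP (P N)))
      Filter.atTop (nhds 0) := by
    have heq : ∀ N : ℕ, c ^ N * Real.exp (-(1 - ε) * LREP (P N))
        = Real.exp ((N : ℝ) * Real.log c + -(1 - ε) * LREP (P N)) := by
      intro N
      rw [Real.exp_add, Real.exp_nat_mul, Real.exp_log (by linarith)]
    simp only [heq]
    apply Real.tendsto_exp_atBot.comp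
    have heq2 : ∀ᶠ N : ℕ in Filter.atTop,
        (N : ℝ) * Real.log c + -(1 - ε) * LREP (P N)
          = (N : ℝ) * (Real.log c + -(1 - ε) * (LREP (P N) / (N : ℝ))) := by
      filter_upwards [Filter.eventually_ge_atTop 1] with N hN
      have hN0 : (N : ℝ) ≠ 0 := by positivity
      field_simp
    rw [Filter.tendsto_congr' heq2]
    apply Filter.Tendsto.atTop_mul_atBot₀ tendsto_natCast_atTop_atTop
    apply Filter.tendsto_atBot_add_const_left
    have h1ε : 0 < 1 - ε := by linarith
    have := hunstable.const_mul_atTop h1ε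
    have : Filter.Tendsto (fun N : ℕ => -((1 - ε) * (LREP (P N) / (N : ℝ))))
        Filter.atTop Filter.atBot := Filter.tendsto_neg_atBot_iff.mpr this
    have h3 : (fun N : ℕ => -(1 - ε) * (LREP (P N) / (N : ℝ)))
        = fun N : ℕ => -((1 - ε) * (LREP (P N) / (N : ℝ))) := by
      funext N; ring
    rw [h3]; exact this
  -- f → 0 by squeezing
  have hf0 : Filter.Tendsto f Filter.atTop (nhds 0) := by
    apply squeeze_zero' _ _ hbound
    · filter_upwards [Filter.eventually_ge_atTop 1] with N hN
      exact Finset.sum_nonneg fun x _ => (hQpos N hN x).le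
    · filter_upwards [Filter.eventually_ge_atTop 1] with N hN
      exact key N hN
  -- conclude
  have hfin : Filter.Tendsto (fun N : ℕ => 1 - f N) Filter.atTop (nhds 1) := by
    simpa using (tendsto_const_nhds.sub hf0 : Filter.Tendsto (fun N => (1:ℝ) - f N)
      Filter.atTop (nhds (1 - 0)))
  apply hfin.congr'
  filter_upwards [Filter.eventually_ge_atTop 1] with N hN
  have := Finset.sum_add_sum_compl (modalSet (P N) ε) (Q N)
  rw [hQsum N hN] at this
  simp only [hf]
  linarith
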